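/- Assume E ⊆ A are finite symmetric integral relation algebras, A is a special extension of E, and E has a flexible trio a, b, c. Then for every n ∈ ω, the elements J(a,n), J(b,n), J(c,n) form a flexible trio of the finite subalgebra B_n of C_E(A) whose atoms are {1'} ∪ {x^(i) : x a diversity atom of A, i < n} ∪ {J(d,n) : d a diversity atom of E}. -/
import Mathlib


universe u v

/-- Non-associative relation algebras: Boolean algebras with a binary
relative multiplication `comp`, unary converse `conv`, and identity `ide`. -/
class NA (α : Type u) extends BooleanAlgebra α where
  comp : α → α → α
  conv : α → α
  ide : α
  comp_ide : ∀ x : α, comp x ide = x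
  ide_comp : ∀ x : α, comp ide x = x
  conv_conv : ∀ x : α, conv (conv x) = x
  conv_sup : ∀ x y : α, conv (x ⊔ y) = conv x ⊔ conv y
  comp_sup : ∀ x y z : α, comp x (y ⊔ z) = comp x y ⊔ comp x z
  sup_comp : ∀ x y z : α, comp (x ⊔ y) z = comp x z ⊔ comp y z
  peirce1 : ∀ x y z : α, comp x y ⊓ z = ⊥ ↔ comp (conv x) z ⊓ y = ⊥
  peirce2 : ∀ x y z : α, comp x y ⊓ z = ⊥ ↔ comp z (conv y) ⊓ x = ⊥

/-- Relation algebras: associative non-associative relation algebras. -/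
class RA (α : Type u) extends NA α where
  comp_assoc : ∀ x y z : α, comp (comp x y) z = comp x (comp y z)

namespace NA

variable {α : Type u} [NA α]

/-- The diversity element 0'. -/
def div : α := (ide : α)ᶜ

/-- Converse is the identity. -/
def Symmetric (α : Type u) [NA α] : Prop := ∀ x : α, conv x = x

/-- The identity 1' is an atom. -/
def Integral (α : Type u) [NA α] : Prop := IsAtom (ide : α)

/-- A diversity atom: an atom below 0'. -/
def DivAtom (x : α) : Prop := IsAtom x ∧ x ≤ (div : α)

/-- A subalgebra of a (non-associative) relation algebra. -/
structure Subalgebra (α : Type u) [NA α] where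
  carrier : Set α
  bot_mem : ⊥ ∈ carrier
  top_mem : ⊤ ∈ carrier
  ide_mem : ide ∈ carrier
  compl_mem : ∀ x ∈ carrier, xᶜ ∈ carrier
  sup_mem : ∀ x ∈ carrier, ∀ y ∈ carrier, x ⊔ y ∈ carrier
  comp_mem : ∀ x ∈ carrier, ∀ y ∈ carrier, comp x y ∈ carrier
  conv_mem : ∀ x ∈ carrier, conv x ∈ carrier

/-- An atom of a subalgebra: a minimal nonzero element of the subalgebra. -/
def Subalgebra.AtomOf (E : Subalgebra α) (a : α) : Prop :=
  a ∈ E.carrier ∧ a ≠ ⊥ ∧ ∀ b ∈ E.carrier, b ≤ a → b = ⊥ ∨ b = a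

/-- A diversity atom of a subalgebra. -/
def Subalgebra.DivAtomOf (E : Subalgebra α) (a : α) : Prop :=
  E.AtomOf a ∧ a ≤ (div : α)

/-- `α` is (a copy of) the algebra E^{23}_q with atoms `e 0 = 1', e 1, …, e (q-1)`:
symmetric, integral, distinct diversity atoms multiply to 0', and
`e i ; e i = (e i)ᶜ` for diversity atoms. -/
def IsE23 (q : ℕ) (e : Fin q → α) : Prop :=
  Symmetric α ∧ Integral α ∧
  Function.Injective e ∧ (∀ i : Fin q, (i : ℕ) = 0 → e i = ide) ∧
  (∀ i, IsAtom (e i)) ∧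
  (∀ x : α, IsAtom x → ∃ i, x = e i) ∧
  (∀ i j : Fin q, (i : ℕ) ≠ 0 → (j : ℕ) ≠ 0 → i ≠ j →
    comp (e i) (e j) = (div : α)) ∧
  (∀ i : Fin q, (i : ℕ) ≠ 0 → comp (e i) (e i) = (e i)ᶜ)

/-- The subalgebra `Q` of `α` is a copy of E^{23}_q with atoms `e i`. -/
def IsE23Sub (Q : Subalgebra α) (q : ℕ) (e : Fin q → α) : Prop :=
  Function.Injective e ∧ (∀ i : Fin q, (i : ℕ) = 0 → e i = ide) ∧
  (∀ i, Q.AtomOf (e i)) ∧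
  (∀ x : α, Q.AtomOf x → ∃ i, x = e i) ∧
  (∀ i j : Fin q, (i : ℕ) ≠ 0 → (j : ℕ) ≠ 0 → i ≠ j →
    comp (e i) (e j) = (div : α)) ∧
  (∀ i : Fin q, (i : ℕ) ≠ 0 → comp (e i) (e i) = (e i)ᶜ)

/-- `cov` is a cover map for the subalgebra `E`: it sends each atom of the
ambient algebra to the atom of `E` containing it. -/
def CoverMap (E : Subalgebra α) (cov : α → α) : Prop :=
  ∀ x : α, IsAtom x → E.AtomOf (cov x) ∧ x ≤ cov x

/-- The ambient atomic algebra is obtained from the subalgebra `B` by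
splitting, with cover map `cov`. -/
def Splitting (B : Subalgebra α) (cov : α → α) : Prop :=
  CoverMap B cov ∧
  (∀ x y : α, DivAtom x → DivAtom y →
    (x = conv y → comp x y = comp (cov x) (cov y)) ∧
    (x ≠ conv y → comp x y = comp (cov x) (cov y) ⊓ (div : α)))

/-- The ambient algebra is a special extension of its subalgebra `E`. -/
def SpecialExt (E : Subalgebra α) : Prop :=
  (∀ a b c : α, E.DivAtomOf a → E.DivAtomOf b → E.DivAtomOf c →
    ¬(a = b ∧ b = c) → c ≤ comp a b →
    ∀ x y : α, IsAtom x → IsAtom y → x ≤ a → y ≤ b → c ≤ comp x y) ∧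
  (∀ a : α, E.DivAtomOf a → a ≤ comp a a →
    ∀ x y : α, IsAtom x → IsAtom y → x ≤ a → y ≤ a → comp x y ⊓ a ≠ ⊥)

/-- A flexible atom. -/
def Flexible (a : α) : Prop :=
  DivAtom a ∧ comp a a = ⊤ ∧
  ∀ x : α, DivAtom x → x ≠ a → comp x a = (div : α)

/-- A flexible atom of a subalgebra. -/
def FlexibleOf (E : Subalgebra α) (a : α) : Prop :=
  E.DivAtomOf a ∧ comp a a = ⊤ ∧
  ∀ x : α, E.DivAtomOf x → x ≠ a → comp x a = (div : α)

/-- A flexible trio of diversity atoms. -/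
def FlexTrio (a b c : α) : Prop :=
  DivAtom a ∧ DivAtom b ∧ DivAtom c ∧ a ≠ b ∧ a ≠ c ∧ b ≠ c ∧
  comp a a = ⊤ ∧ comp b b = ⊤ ∧ comp c c = ⊤ ∧
  comp a b = (div : α) ∧ comp a c = (div : α) ∧ comp b c = (div : α) ∧
  ∀ x : α, IsAtom x → x ∉ ({(ide : α), a, b, c} : Set α) →
    (comp x a = (div : α) ∧ comp x b = (div : α)) ∨
    (comp x a = (div : α) ∧ comp x c = (div : α)) ∨
    (comp x b = (div : α) ∧ comp x c = (div : α))

/-- A flexible trio of diversity atoms of a subalgebra. -/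
def FlexTrioOf (E : Subalgebra α) (a b c : α) : Prop :=
  E.DivAtomOf a ∧ E.DivAtomOf b ∧ E.DivAtomOf c ∧ a ≠ b ∧ a ≠ c ∧ b ≠ c ∧
  comp a a = ⊤ ∧ comp b b = ⊤ ∧ comp c c = ⊤ ∧
  comp a b = (div : α) ∧ comp a c = (div : α) ∧ comp b c = (div : α) ∧
  ∀ d : α, E.DivAtomOf d → d ∉ ({a, b, c} : Set α) →
    (comp d a = (div : α) ∧ comp d b = (div : α)) ∨
    (comp d a = (div : α) ∧ comp d c = (div : α)) ∨
    (comp d b = (div : α) ∧ comp d c = (div : α))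

/-- Basic k-by-k matrices of atoms. -/
def BasicMatrix (k : ℕ) (μ : Fin k → Fin k → α) : Prop :=
  (∀ i j, IsAtom (μ i j)) ∧ (∀ i, μ i i ≤ (ide : α)) ∧
  (∀ i j, conv (μ i j) = μ j i) ∧
  (∀ i j l, μ i j ≤ comp (μ i l) (μ l j))

/-- The identity condition for a basic matrix. -/
def IdCond (k : ℕ) (μ : Fin k → Fin k → α) : Prop :=
  ∀ i j, μ i j = (ide : α) ↔ i = j

/-- The 1-point extension property. -/
def OnePointExt (α : Type u) [NA α] : Prop :=
  ∀ (k : ℕ) (μ : Fin k → Fin k → α), BasicMatrix k μ → IdCond k μ →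
  ∀ x y : α, DivAtom x → DivAtom y → ∀ i j : Fin k, i ≠ j → μ i j ≤ comp x y →
  ∃ μ' : Fin (k + 1) → Fin (k + 1) → α, BasicMatrix (k + 1) μ' ∧ IdCond (k + 1) μ' ∧
    (∀ l m : Fin k, μ' l.castSucc m.castSucc = μ l m) ∧
    μ' i.castSucc (Fin.last k) = x ∧ μ' (Fin.last k) j.castSucc = y

/-- A representation of `α` over a base set `X`. -/
structure Representation (α : Type u) [NA α] (X : Type v) where
  toFun : α → Set (X × X)
  inj : Function.Injective toFun
  map_sup : ∀ a b : α, toFun (a ⊔ b) = toFun a ∪ toFun b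
  map_compl : ∀ a : α, toFun aᶜ = toFun ⊤ \ toFun a
  map_comp : ∀ a b : α,
    toFun (comp a b) = {p | ∃ z, (p.1, z) ∈ toFun a ∧ (z, p.2) ∈ toFun b}
  map_conv : ∀ a : α, toFun (conv a) = {p | (p.2, p.1) ∈ toFun a}
  map_ide : toFun ide = {p | p ∈ toFun ⊤ ∧ p.1 = p.2}

/-- A complete representation: preserves all existing joins. -/
def Representation.IsComplete {α : Type u} [NA α] {X : Type v}
    (r : Representation α X) : Prop :=
  ∀ (S : Set α) (s : α), IsLUB S s → r.toFun s = ⋃ a ∈ S, r.toFun a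

/-- Representability. -/
def Representable (α : Type u) [NA α] : Prop :=
  ∃ X : Type u, Nonempty (Representation α X)

/-- A representation of a subalgebra `E` over a base set `X`. -/
structure SubRepresentation (E : Subalgebra α) (X : Type v) where
  toFun : α → Set (X × X)
  inj : ∀ x ∈ E.carrier, ∀ y ∈ E.carrier, toFun x = toFun y → x = y
  map_sup : ∀ x ∈ E.carrier, ∀ y ∈ E.carrier, toFun (x ⊔ y) = toFun x ∪ toFun y
  map_compl : ∀ x ∈ E.carrier, toFun xᶜ = toFun ⊤ \ toFun x
  map_comp : ∀ x ∈ E.carrier, ∀ y ∈ E.carrier,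
    toFun (comp x y) = {p | ∃ z, (p.1, z) ∈ toFun x ∧ (z, p.2) ∈ toFun y}
  map_conv : ∀ x ∈ E.carrier, toFun (conv x) = {p | (p.2, p.1) ∈ toFun x}
  map_ide : toFun ide = {p | p ∈ toFun ⊤ ∧ p.1 = p.2}

/-- A homomorphism of (non-associative) relation algebras. -/
structure Hom (α : Type u) (β : Type v) [NA α] [NA β] where
  toFun : α → β
  map_sup : ∀ a b : α, toFun (a ⊔ b) = toFun a ⊔ toFun b
  map_compl : ∀ a : α, toFun aᶜ = (toFun a)ᶜ
  map_comp : ∀ a b : α, toFun (comp a b) = comp (toFun a) (toFun b)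
  map_conv : ∀ a : α, toFun (conv a) = conv (toFun a)
  map_ide : toFun ide = ide

/-- The thinning relation T(i,j,k) ⟺ (i ≤ j = k) ∨ (j ≤ k = i) ∨ (k ≤ i = j). -/
def T3 (i j k : ℕ) : Prop :=
  (i ≤ j ∧ j = k) ∨ (j ≤ k ∧ k = i) ∨ (k ≤ i ∧ i = j)

/-- The type of diversity atoms of `α`. -/
abbrev DAt (α : Type u) [NA α] : Type u := {x : α // DivAtom x}

/-- Atoms of the algebra C_E(A): the identity atom `none` together with
copies `some (x, i)` of each diversity atom `x` of `A`, for `i ∈ ω`. -/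
abbrev CAtom (α : Type u) [NA α] : Type u := Option (DAt α × ℕ)

/-- The cycle relation of the atom structure of C_E(A), relative to the cover
map `cov` of the subalgebra E. -/
def Cyc (cov : α → α) : CAtom α → CAtom α → CAtom α → Prop
  | none, none, none => True
  | none, some p, some q => p = q
  | some p, none, some q => p = q
  | some p, some q, none => p = q
  | some p, some q, some r =>
      r.1.1 ≤ comp p.1.1 q.1.1 ∧
      (cov p.1.1 = cov q.1.1 ∧ cov q.1.1 = cov r.1.1 → T3 p.2 q.2 r.2)
  | _, _, _ => False

/-- Relative multiplication in the complex algebra C_E(A). -/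
def Ccomp (cov : α → α) (X Y : Set (CAtom α)) : Set (CAtom α) :=
  {w | ∃ u ∈ X, ∃ v ∈ Y, Cyc cov u v w}

/-- The element J(a, n) of C_E(A). -/
def Jel (a : α) (n : ℕ) : Set (CAtom α) :=
  {w | (∃ p : DAt α × ℕ, w = some p ∧ p.1.1 ≤ a ∧ n ≤ p.2) ∨
       (w = none ∧ (ide : α) ≤ a)}

/-- The atom set B_n of the finite subalgebra of C_E(A). -/
def Bset (E : Subalgebra α) (n : ℕ) : Set (Set (CAtom α)) :=
  {s | s = ({none} : Set (CAtom α))} ∪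
  {s | ∃ (x : DAt α) (i : ℕ), i < n ∧ s = {some (x, i)}} ∪
  {s | ∃ a : α, E.DivAtomOf a ∧ s = Jel a n}

/-- Subalgebra of C_E(A) generated by a set `G` of elements. -/
inductive GenFrom (cov : α → α) (G : Set (Set (CAtom α))) : Set (CAtom α) → Prop
  | base {s : Set (CAtom α)} : s ∈ G → GenFrom cov G s
  | bot : GenFrom cov G ∅
  | idel : GenFrom cov G ({none} : Set (CAtom α))
  | compl {s : Set (CAtom α)} : GenFrom cov G s → GenFrom cov G sᶜ
  | sup {s t : Set (CAtom α)} : GenFrom cov G s → GenFrom cov G t →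
      GenFrom cov G (s ∪ t)
  | cmp {s t : Set (CAtom α)} : GenFrom cov G s → GenFrom cov G t →
      GenFrom cov G (Ccomp cov s t)

/-- Membership in the subalgebra B of C_E(A) generated by the atoms. -/
def Gen (cov : α → α) : Set (CAtom α) → Prop :=
  GenFrom cov {s | ∃ w : CAtom α, s = {w}}

section MyHelpers

variable {α : Type} [NA α]

lemma my_le_of_inf_compl {x y : α} (h : x ⊓ yᶜ = ⊥) : x ≤ y := by
  rw [← sdiff_eq] at h; exact sdiff_eq_bot_iff.mp h

lemma my_comp_comm (hsym : Symmetric α) (u v : α) : comp u v = comp v u := by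
  have key : ∀ a b w : α, comp a b ⊓ w = ⊥ → comp b a ⊓ w = ⊥ := by
    intro a b w h
    rw [peirce2, hsym] at h
    rw [peirce1, hsym] at h
    rw [peirce2, hsym] at h
    exact h
  refine le_antisymm ?_ ?_
  · exact my_le_of_inf_compl (key v u _ inf_compl_eq_bot)
  · exact my_le_of_inf_compl (key u v _ inf_compl_eq_bot)

lemma my_inf_mem (E : Subalgebra α) {x y : α} (hx : x ∈ E.carrier)
    (hy : y ∈ E.carrier) : x ⊓ y ∈ E.carrier := by
  have h := E.compl_mem _ (E.sup_mem _ (E.compl_mem _ hx) _ (E.compl_mem _ hy))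
  simpa using h

lemma my_atom_disj (E : Subalgebra α) {d u : α} (hd : E.AtomOf d) (hu : E.AtomOf u)
    (hne : d ≠ u) : d ⊓ u = ⊥ := by
  rcases hd.2.2 _ (my_inf_mem E hd.1 hu.1) inf_le_left with h | h
  · exact h
  · exfalso
    have hdu : d ≤ u := by rw [← h]; exact inf_le_right
    rcases hu.2.2 _ hd.1 hdu with h' | h'
    · exact hd.2.1 h'
    · exact hne h'

lemma my_ide_not_le (hint : Integral α) {a : α} (ha : a ≤ (div : α)) :
    ¬ (ide : α) ≤ a := by
  intro h
  have h2 : (ide : α) ≤ ide ⊓ (ide : α)ᶜ := le_inf le_rfl (h.trans ha)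
  rw [inf_compl_eq_bot, le_bot_iff] at h2
  exact hint.1 h2

lemma my_cov_div (hint : Integral α) {E : Subalgebra α} {cov : α → α}
    (hcov : CoverMap E cov) {x : α} (hx : DivAtom x) : E.DivAtomOf (cov x) := by
  obtain ⟨hatom, hle⟩ := hcov x hx.1
  refine ⟨hatom, ?_⟩
  rcases hatom.2.2 _ (my_inf_mem E hatom.1 E.ide_mem) inf_le_left with h | h
  · show cov x ≤ (ide : α)ᶜ
    exact my_le_of_inf_compl (by simpa using h)
  · exfalso
    have hcle : cov x ≤ ide := by rw [← h]; exact inf_le_right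
    have hxb : x ≤ (ide : α) ⊓ (ide : α)ᶜ := le_inf (hle.trans hcle) hx.2
    rw [inf_compl_eq_bot, le_bot_iff] at hxb
    exact hx.1.1 hxb

lemma my_cov_eq {E : Subalgebra α} {cov : α → α} (hcov : CoverMap E cov)
    {x d : α} (hx : IsAtom x) (hd : E.AtomOf d) (hle : x ≤ d) : cov x = d := by
  obtain ⟨hatom, hxc⟩ := hcov x hx
  by_contra hne
  have h := my_atom_disj E hatom hd hne
  have hxb : x ≤ ⊥ := by rw [← h]; exact le_inf hxc hle
  exact hx.1 (le_bot_iff.mp hxb)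

lemma my_atom_le [Fintype α] {x : α} (hx : x ≠ ⊥) : ∃ y : α, IsAtom y ∧ y ≤ x :=
  (eq_bot_or_exists_atom_le x).resolve_left hx

lemma my_key (hint : Integral α) {E : Subalgebra α} {cov : α → α}
    (hcov : CoverMap E cov) (hspec : SpecialExt E)
    {d u : α} (hd : E.DivAtomOf d) (hu : E.DivAtomOf u) (hne : d ≠ u)
    (hcomp : comp d u = (div : α)) {z : α} (hz : DivAtom z) :
    ∀ x y : α, IsAtom x → IsAtom y → x ≤ d → y ≤ u → z ≤ comp x y := by
  intro x y hx hy hxd hyu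
  have hcz := my_cov_div hint hcov hz
  have h1 : cov z ≤ comp d u := by rw [hcomp]; exact hcz.2
  have h2 := hspec.1 d u (cov z) hd hu hcz (fun h => hne h.1) h1 x y hx hy hxd hyu
  exact le_trans (hcov z hz.1).2 h2

lemma my_keyself (hsym : Symmetric α) (hint : Integral α) [Fintype α]
    {E : Subalgebra α} {cov : α → α} (hcov : CoverMap E cov) (hspec : SpecialExt E)
    {a : α} (ha : E.DivAtomOf a) (htop : comp a a = ⊤) {z : α} (hz : DivAtom z) :
    ∃ x y : α, IsAtom x ∧ IsAtom y ∧ x ≤ a ∧ y ≤ a ∧ z ≤ comp x y := by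
  by_cases hca : cov z = a
  · have hza : z ≤ a := hca ▸ (hcov z hz.1).2
    have haa : a ≤ comp a a := htop ▸ le_top
    have h2 := hspec.2 a ha haa z z hz.1 hz.1 hza hza
    obtain ⟨y, hy, hyle⟩ := my_atom_le h2
    refine ⟨z, y, hz.1, hy, hza, hyle.trans inf_le_right, ?_⟩
    have hyzz : y ≤ comp z z := hyle.trans inf_le_left
    have hne : comp z y ⊓ z ≠ ⊥ := by
      intro h
      rw [peirce1, hsym] at h
      rw [inf_eq_right.mpr hyzz] at h
      exact hy.1 h
    rcases lt_or_eq_of_le (inf_le_right : comp z y ⊓ z ≤ z) with hlt | heq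
    · exact absurd (hz.1.2 _ hlt) hne
    · exact inf_eq_right.mp heq
  · obtain ⟨x, hx, hxa⟩ := my_atom_le ha.1.2.1
    refine ⟨x, x, hx, hx, hxa, hxa, ?_⟩
    have hcz := my_cov_div hint hcov hz
    have h2 := hspec.1 a a (cov z) ha ha hcz (fun h => hca h.2.symm)
      (htop ▸ le_top) x x hx hx hxa hxa
    exact (hcov z hz.1).2.trans h2

lemma my_Jel_some (hint : Integral α) {d : α} (hd : d ≤ (div : α)) {n : ℕ}
    {w : CAtom α} (hw : w ∈ Jel d n) :
    ∃ p : DAt α × ℕ, w = some p ∧ p.1.1 ≤ d ∧ n ≤ p.2 := by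
  rcases hw with h | ⟨_, hide⟩
  · exact h
  · exact absurd hide (my_ide_not_le hint hd)

lemma my_ccomp_div (hint : Integral α) [Fintype α] {E : Subalgebra α} {cov : α → α}
    (hcov : CoverMap E cov) (hspec : SpecialExt E)
    {d u : α} (hd : E.DivAtomOf d) (hu : E.DivAtomOf u) (hne : d ≠ u)
    (hcomp : comp d u = (div : α)) {X : Set (CAtom α)}
    (hX : ∀ w ∈ X, ∃ p : DAt α × ℕ, w = some p ∧ p.1.1 ≤ d)
    (hXne : X.Nonempty) (n : ℕ) :
    Ccomp cov X (Jel u n) = ({none} : Set (CAtom α))ᶜ := by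
  ext w
  simp only [Set.mem_compl_iff, Set.mem_singleton_iff]
  constructor
  · rintro ⟨u', hu', v, hv, hcyc⟩ hwnone
    subst hwnone
    obtain ⟨p, rfl, hpd⟩ := hX u' hu'
    obtain ⟨q, rfl, hqu, -⟩ := my_Jel_some hint hu.2 hv
    have hpq : p = q := hcyc
    subst hpq
    have hb : p.1.1 ≤ ⊥ := by
      rw [← my_atom_disj E hd.1 hu.1 hne]; exact le_inf hpd hqu
    exact p.1.2.1.1 (le_bot_iff.mp hb)
  · intro hw
    obtain ⟨w0, hw0⟩ := hXne
    obtain ⟨p, rfl, hpd⟩ := hX w0 hw0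
    match w, hw with
    | some zk, _ =>
      obtain ⟨y, hy, hyu⟩ := my_atom_le hu.1.2.1
      have hydiv : DivAtom y := ⟨hy, hyu.trans hu.2⟩
      refine ⟨some p, hw0, some (⟨⟨y, hydiv⟩, n⟩),
        Or.inl ⟨⟨⟨y, hydiv⟩, n⟩, rfl, hyu, le_rfl⟩, ?_, ?_⟩
      · exact my_key hint hcov hspec hd hu hne hcomp zk.1.2
          p.1.1 y p.1.2.1 hy hpd hyu
      · rintro ⟨h1, -⟩
        exfalso
        have e1 : cov p.1.1 = d := my_cov_eq hcov p.1.2.1 hd.1 hpd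
        have e2 : cov y = u := my_cov_eq hcov hy hu.1 hyu
        exact hne (e1 ▸ e2 ▸ h1)

lemma my_ccomp_JJ (hint : Integral α) [Fintype α] {E : Subalgebra α} {cov : α → α}
    (hcov : CoverMap E cov) (hspec : SpecialExt E)
    {d u : α} (hd : E.DivAtomOf d) (hu : E.DivAtomOf u) (hne : d ≠ u)
    (hcomp : comp d u = (div : α)) (n : ℕ) :
    Ccomp cov (Jel d n) (Jel u n) = ({none} : Set (CAtom α))ᶜ := by
  obtain ⟨x, hx, hxd⟩ := my_atom_le hd.1.2.1
  refine my_ccomp_div hint hcov hspec hd hu hne hcomp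
    (fun w hw => ?_) ⟨some (⟨⟨x, ⟨hx, hxd.trans hd.2⟩⟩, n⟩),
      Or.inl ⟨_, rfl, hxd, le_rfl⟩⟩ n
  obtain ⟨p, rfl, hpd, -⟩ := my_Jel_some hint hd.2 hw
  exact ⟨p, rfl, hpd⟩

lemma my_ccomp_sing (hint : Integral α) [Fintype α] {E : Subalgebra α} {cov : α → α}
    (hcov : CoverMap E cov) (hspec : SpecialExt E)
    {u : α} (hu : E.DivAtomOf u) {x : DAt α} {i : ℕ}
    (hne : cov x.1 ≠ u) (hcomp : comp (cov x.1) u = (div : α)) (n : ℕ) :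
    Ccomp cov ({some (x, i)} : Set (CAtom α)) (Jel u n)
      = ({none} : Set (CAtom α))ᶜ := by
  have hcd : E.DivAtomOf (cov x.1) := my_cov_div hint hcov x.2
  refine my_ccomp_div (X := ({some (x, i)} : Set (CAtom α))) hint hcov hspec
    hcd hu hne hcomp (fun w hw => ?_) ⟨some (x, i), rfl⟩ n
  rw [Set.mem_singleton_iff] at hw
  exact ⟨(x, i), hw, (hcov x.1 x.2.1).2⟩

lemma my_ccomp_top (hsym : Symmetric α) (hint : Integral α) [Fintype α]
    {E : Subalgebra α} {cov : α → α} (hcov : CoverMap E cov) (hspec : SpecialExt E)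
    {a : α} (ha : E.DivAtomOf a) (htop : comp a a = ⊤) (n : ℕ) :
    Ccomp cov (Jel a n) (Jel a n) = Set.univ := by
  apply Set.eq_univ_of_forall
  intro w
  obtain ⟨x0, hx0, hx0a⟩ := my_atom_le ha.1.2.1
  have hx0div : DivAtom x0 := ⟨hx0, hx0a.trans ha.2⟩
  match w with
  | none =>
    exact ⟨some (⟨⟨x0, hx0div⟩, n⟩), Or.inl ⟨_, rfl, hx0a, le_rfl⟩,
      some (⟨⟨x0, hx0div⟩, n⟩), Or.inl ⟨_, rfl, hx0a, le_rfl⟩, rfl⟩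
  | some zk =>
    obtain ⟨x, y, hx, hy, hxa, hya, hz⟩ :=
      my_keyself hsym hint hcov hspec ha htop zk.1.2
    refine ⟨some (⟨⟨x, ⟨hx, hxa.trans ha.2⟩⟩, max n zk.2⟩),
      Or.inl ⟨_, rfl, hxa, le_max_left _ _⟩,
      some (⟨⟨y, ⟨hy, hya.trans ha.2⟩⟩, max n zk.2⟩),
      Or.inl ⟨_, rfl, hya, le_max_left _ _⟩, hz,
      fun _ => Or.inr (Or.inr ⟨le_max_right _ _, rfl⟩)⟩

lemma my_Jel_ne (hint : Integral α) [Fintype α] {E : Subalgebra α} {d u : α}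
    (hd : E.DivAtomOf d) (hu : E.DivAtomOf u) (hne : d ≠ u) (n : ℕ) :
    Jel d n ≠ Jel u n := by
  obtain ⟨x, hx, hxd⟩ := my_atom_le hd.1.2.1
  intro h
  have hmem : (some (⟨⟨x, ⟨hx, hxd.trans hd.2⟩⟩, n⟩) : CAtom α) ∈ Jel d n :=
    Or.inl ⟨_, rfl, hxd, le_rfl⟩
  rw [h] at hmem
  obtain ⟨p, hp, hpu, -⟩ := my_Jel_some hint hu.2 hmem
  obtain rfl : (⟨⟨x, ⟨hx, hxd.trans hd.2⟩⟩, n⟩ : DAt α × ℕ) = p := Option.some.inj hp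
  have hb : x ≤ ⊥ := by
    rw [← my_atom_disj E hd.1 hu.1 hne]; exact le_inf hxd hpu
  exact hx.1 (le_bot_iff.mp hb)

end MyHelpers

end NA

/-- If E ⊆ A are finite symmetric integral relation algebras, A
is a special extension of E, and a, b, c is a flexible trio of E, then for
every n the elements J(a,n), J(b,n), J(c,n) form a flexible trio of the finite
subalgebra B_n of C_E(A) whose atom set is Bset E n. -/
theorem stmt15 {α : Type} [RA α] [Fintype α]
    (hsym : NA.Symmetric α) (hint : NA.Integral α)
    (E : NA.Subalgebra α) (cov : α → α) (hcov : NA.CoverMap E cov)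
    (hspec : NA.SpecialExt E)
    (a b c : α) (htrio : NA.FlexTrioOf E a b c) (n : ℕ) :
    NA.Jel a n ∈ NA.Bset E n ∧ NA.Jel b n ∈ NA.Bset E n ∧
    NA.Jel c n ∈ NA.Bset E n ∧
    NA.Jel a n ≠ NA.Jel b n ∧ NA.Jel a n ≠ NA.Jel c n ∧
    NA.Jel b n ≠ NA.Jel c n ∧
    NA.Ccomp cov (NA.Jel a n) (NA.Jel a n) = Set.univ ∧
    NA.Ccomp cov (NA.Jel b n) (NA.Jel b n) = Set.univ ∧
    NA.Ccomp cov (NA.Jel c n) (NA.Jel c n) = Set.univ ∧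
    NA.Ccomp cov (NA.Jel a n) (NA.Jel b n) = ({none} : Set (NA.CAtom α))ᶜ ∧
    NA.Ccomp cov (NA.Jel a n) (NA.Jel c n) = ({none} : Set (NA.CAtom α))ᶜ ∧
    NA.Ccomp cov (NA.Jel b n) (NA.Jel c n) = ({none} : Set (NA.CAtom α))ᶜ ∧
    ∀ s ∈ NA.Bset E n, s ≠ ({none} : Set (NA.CAtom α)) →
      s ∉ ({NA.Jel a n, NA.Jel b n, NA.Jel c n} : Set (Set (NA.CAtom α))) →
      ((NA.Ccomp cov s (NA.Jel a n) = ({none} : Set (NA.CAtom α))ᶜ ∧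
        NA.Ccomp cov s (NA.Jel b n) = ({none} : Set (NA.CAtom α))ᶜ) ∨
       (NA.Ccomp cov s (NA.Jel a n) = ({none} : Set (NA.CAtom α))ᶜ ∧
        NA.Ccomp cov s (NA.Jel c n) = ({none} : Set (NA.CAtom α))ᶜ) ∨
       (NA.Ccomp cov s (NA.Jel b n) = ({none} : Set (NA.CAtom α))ᶜ ∧
        NA.Ccomp cov s (NA.Jel c n) = ({none} : Set (NA.CAtom α))ᶜ)) := by
  obtain ⟨hda, hdb, hdc, hab, hac, hbc, haa, hbb, hcc, hab', hac', hbc', hlast⟩ := htrio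
  have hba' : NA.comp b a = NA.div := (NA.my_comp_comm hsym a b) ▸ hab'
  have hca' : NA.comp c a = NA.div := (NA.my_comp_comm hsym a c) ▸ hac'
  have hcb' : NA.comp c b = NA.div := (NA.my_comp_comm hsym b c) ▸ hbc'
  refine ⟨Or.inr ⟨a, hda, rfl⟩, Or.inr ⟨b, hdb, rfl⟩, Or.inr ⟨c, hdc, rfl⟩,
    NA.my_Jel_ne hint hda hdb hab n, NA.my_Jel_ne hint hda hdc hac n,
    NA.my_Jel_ne hint hdb hdc hbc n,
    NA.my_ccomp_top hsym hint hcov hspec hda haa n,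
    NA.my_ccomp_top hsym hint hcov hspec hdb hbb n,
    NA.my_ccomp_top hsym hint hcov hspec hdc hcc n,
    NA.my_ccomp_JJ hint hcov hspec hda hdb hab hab' n,
    NA.my_ccomp_JJ hint hcov hspec hda hdc hac hac' n,
    NA.my_ccomp_JJ hint hcov hspec hdb hdc hbc hbc' n, ?_⟩
  intro s hs hs1 hs2
  rcases hs with (hs | hs) | hs
  · exact absurd hs hs1
  · obtain ⟨x, i, hi, rfl⟩ := hs
    by_cases h1 : cov x.1 = a
    · exact Or.inr (Or.inr
        ⟨NA.my_ccomp_sing hint hcov hspec hdb (h1 ▸ hab) (h1 ▸ hab') n,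
         NA.my_ccomp_sing hint hcov hspec hdc (h1 ▸ hac) (h1 ▸ hac') n⟩)
    · by_cases h2 : cov x.1 = b
      · exact Or.inr (Or.inl
          ⟨NA.my_ccomp_sing hint hcov hspec hda (h2 ▸ hab.symm) (h2 ▸ hba') n,
           NA.my_ccomp_sing hint hcov hspec hdc (h2 ▸ hbc) (h2 ▸ hbc') n⟩)
      · by_cases h3 : cov x.1 = c
        · exact Or.inl
            ⟨NA.my_ccomp_sing hint hcov hspec hda (h3 ▸ hac.symm) (h3 ▸ hca') n,
             NA.my_ccomp_sing hint hcov hspec hdb (h3 ▸ hbc.symm) (h3 ▸ hcb') n⟩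
        · have hcd := NA.my_cov_div hint hcov x.2
          have hnm : cov x.1 ∉ ({a, b, c} : Set α) := by
            simp [h1, h2, h3]
          rcases hlast (cov x.1) hcd hnm with ⟨p1, p2⟩ | ⟨p1, p2⟩ | ⟨p1, p2⟩
          · exact Or.inl
              ⟨NA.my_ccomp_sing hint hcov hspec hda h1 p1 n,
               NA.my_ccomp_sing hint hcov hspec hdb h2 p2 n⟩
          · exact Or.inr (Or.inl
              ⟨NA.my_ccomp_sing hint hcov hspec hda h1 p1 n,
               NA.my_ccomp_sing hint hcov hspec hdc h3 p2 n⟩)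
          · exact Or.inr (Or.inr
              ⟨NA.my_ccomp_sing hint hcov hspec hdb h2 p1 n,
               NA.my_ccomp_sing hint hcov hspec hdc h3 p2 n⟩)
  · obtain ⟨d, hdd, rfl⟩ := hs
    have h1 : d ≠ a := fun h => hs2 (by rw [h]; exact Or.inl rfl)
    have h2 : d ≠ b := fun h => hs2 (by rw [h]; exact Or.inr (Or.inl rfl))
    have h3 : d ≠ c := fun h => hs2 (by rw [h]; exact Or.inr (Or.inr rfl))
    have hnm : d ∉ ({a, b, c} : Set α) := by simp [h1, h2, h3]
    rcases hlast d hdd hnm with ⟨p1, p2⟩ | ⟨p1, p2⟩ | ⟨p1, p2⟩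
    · exact Or.inl
        ⟨NA.my_ccomp_JJ hint hcov hspec hdd hda h1 p1 n,
         NA.my_ccomp_JJ hint hcov hspec hdd hdb h2 p2 n⟩
    · exact Or.inr (Or.inl
        ⟨NA.my_ccomp_JJ hint hcov hspec hdd hda h1 p1 n,
         NA.my_ccomp_JJ hint hcov hspec hdd hdc h3 p2 n⟩)
    · exact Or.inr (Or.inr
        ⟨NA.my_ccomp_JJ hint hcov hspec hdd hdb h2 p1 n,
         NA.my_ccomp_JJ hint hcov hspec hdd hdc h3 p2 n⟩)
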